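/- Let X ∈ ℍ^{M×N}, let L ∈ ℍ^{M×r} satisfy LᴴL = I_r, and let R ∈ ℍ^{r×N} satisfy RRᴴ = I_r. Define D̃ = Lᴴ X Rᴴ ∈ ℍ^{r×r}. Then for every D ∈ ℍ^{r×r}, ‖X − L D R‖_F² = ‖X − L D̃ R‖_F² + ‖D − D̃‖_F². -/

import Mathlib

open Matrix

lemma q_sum_re {α : Type*} (s : Finset α) (f : α → Quaternion ℝ) :
    (∑ x ∈ s, f x).re = ∑ x ∈ s, (f x).re :=
  map_sum (QuaternionAlgebra.reₗ (R := ℝ) (-1) 0 (-1)) f s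

lemma q_re_mul_comm (a b : Quaternion ℝ) : (a * b).re = (b * a).re := by
  simp [Quaternion.re_mul]; ring

lemma q_norm_sq (a : Quaternion ℝ) : ‖a‖ ^ 2 = (a * star a).re := by
  rw [← Quaternion.inner_def, real_inner_self_eq_norm_sq]

noncomputable def trRe {m n : ℕ} (A : Matrix (Fin m) (Fin n) (Quaternion ℝ))
    (B : Matrix (Fin n) (Fin m) (Quaternion ℝ)) : ℝ :=
  ∑ i, ((A * B) i i).re

lemma trRe_comm {m n : ℕ} (A : Matrix (Fin m) (Fin n) (Quaternion ℝ))
    (B : Matrix (Fin n) (Fin m) (Quaternion ℝ)) : trRe A B = trRe B A := by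
  unfold trRe
  simp only [Matrix.mul_apply, q_sum_re]
  rw [Finset.sum_comm]
  exact Finset.sum_congr rfl fun j _ => Finset.sum_congr rfl fun i _ => q_re_mul_comm _ _

lemma trRe_assoc {m n k : ℕ} (A : Matrix (Fin m) (Fin n) (Quaternion ℝ))
    (B : Matrix (Fin n) (Fin k) (Quaternion ℝ))
    (C : Matrix (Fin k) (Fin m) (Quaternion ℝ)) : trRe (A * B) C = trRe A (B * C) := by
  unfold trRe
  rw [Matrix.mul_assoc]

lemma trRe_star {m n : ℕ} (A B : Matrix (Fin m) (Fin n) (Quaternion ℝ)) :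
    trRe A Bᴴ = trRe B Aᴴ := by
  unfold trRe
  refine Finset.sum_congr rfl fun i _ => ?_
  have h : B * Aᴴ = (A * Bᴴ)ᴴ := by
    rw [Matrix.conjTranspose_mul, Matrix.conjTranspose_conjTranspose]
  rw [h, Matrix.conjTranspose_apply]
  simp

lemma trRe_add_add {m n : ℕ} (A B : Matrix (Fin m) (Fin n) (Quaternion ℝ))
    (C E : Matrix (Fin n) (Fin m) (Quaternion ℝ)) :
    trRe (A + B) (C + E) = trRe A C + trRe A E + trRe B C + trRe B E := by
  unfold trRe
  simp only [Matrix.add_mul, Matrix.mul_add, Matrix.add_apply, Quaternion.re_add,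
    Finset.sum_add_distrib]
  ring

noncomputable def frob {M N : ℕ} (A : Matrix (Fin M) (Fin N) (Quaternion ℝ)) : ℝ :=
  Real.sqrt (∑ m : Fin M, ∑ n : Fin N, ‖A m n‖ ^ 2)

lemma frob_sq {M N : ℕ} (A : Matrix (Fin M) (Fin N) (Quaternion ℝ)) :
    frob A ^ 2 = trRe A Aᴴ := by
  rw [frob, Real.sq_sqrt (by positivity)]
  unfold trRe
  simp only [Matrix.mul_apply, Matrix.conjTranspose_apply, q_sum_re]
  exact Finset.sum_congr rfl fun i _ => Finset.sum_congr rfl fun j _ => q_norm_sq _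

theorem middle_factor_pythagoras (M N r : ℕ)
    (X : Matrix (Fin M) (Fin N) (Quaternion ℝ))
    (L : Matrix (Fin M) (Fin r) (Quaternion ℝ))
    (R : Matrix (Fin r) (Fin N) (Quaternion ℝ))
    (hL : Lᴴ * L = 1) (hR : R * Rᴴ = 1)
    (D : Matrix (Fin r) (Fin r) (Quaternion ℝ)) :
    frob (X - L * D * R) ^ 2 =
      frob (X - L * (Lᴴ * X * Rᴴ) * R) ^ 2 + frob (D - Lᴴ * X * Rᴴ) ^ 2 := by
  set Dt : Matrix (Fin r) (Fin r) (Quaternion ℝ) := Lᴴ * X * Rᴴ with hDt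
  set E : Matrix (Fin r) (Fin r) (Quaternion ℝ) := Dt - D with hE
  set P : Matrix (Fin M) (Fin N) (Quaternion ℝ) := X - L * Dt * R with hP
  set Q : Matrix (Fin M) (Fin N) (Quaternion ℝ) := L * E * R with hQ
  have hsplit : X - L * D * R = P + Q := by
    rw [hP, hQ, hE, Matrix.mul_sub, Matrix.sub_mul]
    abel
  -- Lᴴ P Rᴴ = 0
  have hz : Lᴴ * P * Rᴴ = 0 := by
    rw [hP, Matrix.mul_sub, Matrix.sub_mul]
    have key : Lᴴ * (L * Dt * R) * Rᴴ = Dt := by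
      simp only [Matrix.mul_assoc]
      rw [hR, Matrix.mul_one, ← Matrix.mul_assoc, hL, Matrix.one_mul]
    rw [key, ← hDt, sub_self]
  -- cross term vanishes
  have hcross : trRe P Qᴴ = 0 := by
    rw [hQ, Matrix.conjTranspose_mul, Matrix.conjTranspose_mul]
    -- Qᴴ = Rᴴ * (Eᴴ * Lᴴ)? conjTranspose_mul gives Rᴴ * (L*E)ᴴ = Rᴴ * (Eᴴ * Lᴴ)
    rw [← trRe_assoc, ← trRe_assoc, trRe_comm, ← trRe_assoc, ← Matrix.mul_assoc, hz]
    unfold trRe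
    simp [Quaternion.re_zero]
  -- ‖Q‖² = ‖E‖²
  have hQE : trRe Q Qᴴ = trRe E Eᴴ := by
    rw [hQ, Matrix.conjTranspose_mul, Matrix.conjTranspose_mul]
    rw [trRe_assoc, trRe_assoc]
    have h1 : R * (Rᴴ * (Eᴴ * Lᴴ)) = Eᴴ * Lᴴ := by
      rw [← Matrix.mul_assoc, hR, Matrix.one_mul]
    rw [h1, ← trRe_assoc, ← trRe_assoc, trRe_comm, ← trRe_assoc, ← Matrix.mul_assoc, hL,
      Matrix.one_mul]
  have hDE : frob (D - Dt) ^ 2 = trRe E Eᴴ := by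
    have : D - Dt = -E := by rw [hE]; abel
    rw [frob_sq, this]
    have hneg : (-E)ᴴ = -(Eᴴ) := Matrix.conjTranspose_neg E
    rw [hneg]
    unfold trRe
    simp
  rw [hsplit, frob_sq, Matrix.conjTranspose_add, trRe_add_add, hcross,
    trRe_star Q P, hcross, frob_sq, hDE, hQE]
  ring
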